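/- Let p > 0, let A be a complex n×n matrix whose spectrum belongs to P_e = {λ ∈ ℂ : (Im λ)² > 2p·Re λ}, and let H be a Hermitian positive definite matrix satisfying HA + A*H − (1/(2p))·A*HA + (1/(4p))·(HA² + (A*)²H) = −I. If B is a complex n×n matrix such that HB + B*H − (1/(2p))·(A*HB + B*HA + B*HB) + (1/(4p))·(H(AB + BA + B²) + (AB + BA + B²)*H) < I (i.e., I minus this matrix is positive definite), then the spectrum of A + B also belongs to P_e. -/

import Mathlib

open Matrix
open scoped ComplexOrder

/-- Perturbation theorem for the exterior of the parabola: if the spectrum of `A`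
lies in `P_e`, `H > 0` solves the parabolic Lyapunov-type equation with right-hand
side `-I`, and the perturbation `B` satisfies the matrix inequality (17), then the
spectrum of `A + B` also lies in `P_e`. -/
theorem spectrum_perturbed_in_parabola_exterior {n : ℕ} (p : ℝ) (hp : 0 < p)
    (A : Matrix (Fin n) (Fin n) ℂ)
    (hA : ∀ μ ∈ spectrum ℂ A, 2 * p * μ.re < μ.im ^ 2)
    (H : Matrix (Fin n) (Fin n) ℂ) (hH : H.PosDef)
    (heq : H * A + Aᴴ * H - ((1 / (2 * p) : ℝ) : ℂ) • (Aᴴ * H * A)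
      + ((1 / (4 * p) : ℝ) : ℂ) • (H * A ^ 2 + Aᴴ ^ 2 * H) = -1)
    (B : Matrix (Fin n) (Fin n) ℂ)
    (hB : (1 - (H * B + Bᴴ * H - ((1 / (2 * p) : ℝ) : ℂ) • (Aᴴ * H * B + Bᴴ * H * A + Bᴴ * H * B)
      + ((1 / (4 * p) : ℝ) : ℂ) •
        (H * (A * B + B * A + B ^ 2) + (A * B + B * A + B ^ 2)ᴴ * H))).PosDef) :
    ∀ μ ∈ spectrum ℂ (A + B), 2 * p * μ.re < μ.im ^ 2 := by
  intro μ hμ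
  set a : ℂ := ((1 / (2 * p) : ℝ) : ℂ)
  set b : ℂ := ((1 / (4 * p) : ℝ) : ℂ)
  set C := A + B with hC
  set M := H * B + Bᴴ * H - a • (Aᴴ * H * B + Bᴴ * H * A + Bᴴ * H * B)
      + b • (H * (A * B + B * A + B ^ 2) + (A * B + B * A + B ^ 2)ᴴ * H) with hM
  -- matrix identity
  have key : H * C + Cᴴ * H - a • (Cᴴ * H * C) + b • (H * C ^ 2 + Cᴴ ^ 2 * H) = -1 + M := by
    rw [← heq, hM, hC]
    have h1 : (A + B)ᴴ * H * (A + B)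
        = Aᴴ * H * A + (Aᴴ * H * B + Bᴴ * H * A + Bᴴ * H * B) := by
      simp only [conjTranspose_add]; noncomm_ring
    have h2 : H * (A + B) ^ 2 + (A + B)ᴴ ^ 2 * H
        = (H * A ^ 2 + Aᴴ ^ 2 * H)
          + (H * (A * B + B * A + B ^ 2) + (A * B + B * A + B ^ 2)ᴴ * H) := by
      simp only [conjTranspose_add, conjTranspose_mul, conjTranspose_pow]; noncomm_ring
    rw [h1, h2, smul_add, smul_add, conjTranspose_add, mul_add, add_mul]
    module
  -- eigenvector
  rw [← AlgEquiv.spectrum_eq (Matrix.toLinAlgEquiv' : Matrix (Fin n) (Fin n) ℂ ≃ₐ[ℂ] _)] at hμ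
  obtain ⟨v, hv⟩ := (Module.End.HasEigenvalue.of_mem_spectrum hμ).exists_hasEigenvector
  have hvne : v ≠ 0 := hv.2
  have hev : C *ᵥ v = μ • v := by
    have := hv.apply_eq_smul
    rwa [Matrix.toLinAlgEquiv'_apply] at this
  -- scalar computations
  set c : ℂ := star v ⬝ᵥ (H *ᵥ v) with hc
  have hcpos : 0 < c := hH.dotProduct_mulVec_pos hvne
  have f1 : star v ⬝ᵥ ((H * C) *ᵥ v) = μ * c := by
    rw [← mulVec_mulVec, hev, mulVec_smul, dotProduct_smul, smul_eq_mul]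
  have fstar : ∀ w : Fin n → ℂ, star v ⬝ᵥ (Cᴴ *ᵥ w) = (starRingEnd ℂ) μ * (star v ⬝ᵥ w) := by
    intro w
    rw [dotProduct_mulVec, ← star_mulVec, hev]
    simp [star_smul, smul_dotProduct, smul_eq_mul]
  have f2 : star v ⬝ᵥ ((Cᴴ * H) *ᵥ v) = (starRingEnd ℂ) μ * c := by
    rw [← mulVec_mulVec]; exact fstar _
  have f3 : star v ⬝ᵥ ((Cᴴ * H * C) *ᵥ v) = (starRingEnd ℂ) μ * (μ * c) := by
    rw [← mulVec_mulVec, ← mulVec_mulVec, hev, mulVec_smul, mulVec_smul,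
      dotProduct_smul, smul_eq_mul, fstar]; ring
  have f4 : star v ⬝ᵥ ((H * C ^ 2) *ᵥ v) = μ * μ * c := by
    have e1 : (H * C ^ 2) *ᵥ v = μ • (μ • (H *ᵥ v)) := by
      rw [sq, ← mul_assoc, ← mulVec_mulVec, hev, mulVec_smul, ← mulVec_mulVec, hev, mulVec_smul]
    rw [e1, dotProduct_smul, dotProduct_smul, smul_eq_mul, smul_eq_mul, ← hc]; ring
  have f5 : star v ⬝ᵥ ((Cᴴ ^ 2 * H) *ᵥ v)
      = (starRingEnd ℂ) μ * ((starRingEnd ℂ) μ * c) := by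
    rw [sq, mul_assoc, ← mulVec_mulVec, fstar, ← mulVec_mulVec, fstar]
  set k : ℂ := μ + (starRingEnd ℂ) μ - a * ((starRingEnd ℂ) μ * μ)
      + b * (μ * μ + (starRingEnd ℂ) μ * (starRingEnd ℂ) μ) with hk
  have hL : star v ⬝ᵥ ((H * C + Cᴴ * H - a • (Cᴴ * H * C)
      + b • (H * C ^ 2 + Cᴴ ^ 2 * H)) *ᵥ v) = k * c := by
    simp only [add_mulVec, sub_mulVec, smul_mulVec, dotProduct_add, dotProduct_sub,
      dotProduct_smul, smul_eq_mul, f1, f2, f3, f4, f5, hk]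
    ring
  have hd : star v ⬝ᵥ (((-1 : Matrix (Fin n) (Fin n) ℂ) + M) *ᵥ v) < 0 := by
    have h0 := hB.dotProduct_mulVec_pos hvne
    rw [sub_mulVec, dotProduct_sub] at h0
    rw [add_mulVec, dotProduct_add, neg_mulVec, dotProduct_neg]
    rw [neg_add_eq_sub]
    exact sub_neg.mpr (sub_pos.mp h0)
  have hkc : k * c < 0 := by
    rw [← hL, key]; exact hd
  -- extract real part
  obtain ⟨hre, him⟩ := Complex.lt_def.mp hkc
  obtain ⟨hcre, hcim⟩ := Complex.lt_def.mp hcpos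
  simp only [Complex.zero_re, Complex.zero_im] at hre hcre hcim
  rw [Complex.mul_re, ← hcim] at hre
  have hkre : k.re < 0 := by nlinarith
  have hkre' : k.re = 2 * μ.re - μ.im ^ 2 / p := by
    simp only [hk, Complex.add_re, Complex.sub_re, Complex.mul_re, Complex.mul_im,
      Complex.conj_re, Complex.conj_im, Complex.ofReal_re, Complex.ofReal_im, a, b]
    field_simp
    ring
  rw [hkre'] at hkre
  have h2p : 0 < p := hp
  rw [sub_neg] at hkre
  calc 2 * p * μ.re < p * (μ.im ^ 2 / p) := by nlinarith
    _ = μ.im ^ 2 := by field_simp
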